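/- arXiv:2307.09053 — 2 statements merged into one kernel-verified Lean document; each statement's English description precedes it below -/
import Mathlib

section
/- Let X be a compact topological space and let H be an additive subgroup of the space C(X, ℝ) of real-valued continuous functions on X, equipped with the supremum norm and the pointwise order. Assume: (i) every element of H is the difference of two elements of H that are nonnegative (pointwise); and (ii) for every nonnegative x ∈ H and every natural number n ≥ 1 there exists a nonnegative y ∈ H such that n·y ≤ x ≤ (n+1)·y pointwise. Then the norm-closure of H in C(X, ℝ) is an ℝ-linear subspace of C(X, ℝ); in particular, for every x ∈ H and every real number c, the function c·x lies in the closure of H. -/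
theorem closure_is_subspace_of_weakly_divisible_subgroup
    (X : Type*) [TopologicalSpace X] [CompactSpace X]
    (H : AddSubgroup C(X, ℝ))
    (hdiff : ∀ x ∈ H, ∃ a ∈ H, ∃ b ∈ H, 0 ≤ a ∧ 0 ≤ b ∧ x = a - b)
    (hdiv : ∀ x ∈ H, 0 ≤ x → ∀ n : ℕ, 1 ≤ n →
      ∃ y ∈ H, 0 ≤ y ∧ (n : ℝ) • y ≤ x ∧ x ≤ ((n : ℝ) + 1) • y) :
    (∃ V : Submodule ℝ C(X, ℝ), (V : Set C(X, ℝ)) = closure (H : Set C(X, ℝ))) ∧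
      ∀ x ∈ H, ∀ c : ℝ, c • x ∈ closure (H : Set C(X, ℝ)) := by
  -- Step 1: for nonnegative x ∈ H and k ≥ 1, (1/k) • x ∈ closure H
  have key : ∀ x ∈ H, 0 ≤ x → ∀ k : ℕ, 1 ≤ k →
      ((k : ℝ)⁻¹) • x ∈ closure (H : Set C(X, ℝ)) := by
    intro x hxH hx k hk
    rw [Metric.mem_closure_iff]
    intro ε hε
    obtain ⟨n₀, hn₀⟩ := exists_nat_gt (‖x‖ / ((k : ℝ) * ε))
    set n : ℕ := n₀ + 1 with hn_def
    have hn1 : 1 ≤ n := Nat.le_add_left 1 n₀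
    have hnk : 1 ≤ n * k := Nat.one_le_iff_ne_zero.mpr (by positivity)
    obtain ⟨y, hyH, hy0, hy1, hy2⟩ := hdiv x hxH hx (n * k) hnk
    refine ⟨n • y, H.nsmul_mem hyH n, ?_⟩
    rw [dist_eq_norm]
    have hkpos : (0 : ℝ) < k := by exact_mod_cast hk
    have hk1 : (1 : ℝ) ≤ k := by exact_mod_cast hk
    have hnpos : (0 : ℝ) < n := by exact_mod_cast hn1
    have hxnorm : ‖x‖ < (n : ℝ) * k * ε := by
      have h1 : ‖x‖ / ((k : ℝ) * ε) < n :=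
        lt_of_lt_of_le hn₀ (by exact_mod_cast Nat.le_add_right n₀ 1)
      have := (div_lt_iff₀ (by positivity)).mp h1
      nlinarith
    rw [ContinuousMap.norm_lt_iff _ hε]
    intro t
    have h1 : (n : ℝ) * k * y t ≤ x t := by
      have := hy1 t
      simpa [mul_assoc] using this
    have h2 : x t ≤ ((n : ℝ) * k + 1) * y t := by
      have := hy2 t
      simpa [mul_assoc] using this
    have hyt : 0 ≤ y t := hy0 t
    have hxt : x t ≤ ‖x‖ := le_trans (le_abs_self _) (x.norm_coe_le_norm t)
    have hxt0 : 0 ≤ x t := hx t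
    have hval : (((k : ℝ)⁻¹) • x - n • y) t = (k : ℝ)⁻¹ * x t - (n : ℝ) * y t := by
      simp
    rw [Real.norm_eq_abs, hval]
    have hinvpos : (0 : ℝ) < (k : ℝ)⁻¹ := by positivity
    have e1 : (k : ℝ)⁻¹ * ((n : ℝ) * k * y t) = (n : ℝ) * y t := by
      field_simp
    have e2 : (k : ℝ)⁻¹ * (((n : ℝ) * k + 1) * y t) = (n : ℝ) * y t + (k : ℝ)⁻¹ * y t := by
      field_simp
    have m1 : (k : ℝ)⁻¹ * ((n : ℝ) * k * y t) ≤ (k : ℝ)⁻¹ * x t :=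
      mul_le_mul_of_nonneg_left h1 hinvpos.le
    have m2 : (k : ℝ)⁻¹ * x t ≤ (k : ℝ)⁻¹ * (((n : ℝ) * k + 1) * y t) :=
      mul_le_mul_of_nonneg_left h2 hinvpos.le
    have hlow : 0 ≤ (k : ℝ)⁻¹ * x t - (n : ℝ) * y t := by
      rw [e1] at m1; linarith
    have hyε : y t < ε := by
      have hmul : (n : ℝ) * k * y t < (n : ℝ) * k * ε := by linarith
      exact lt_of_mul_lt_mul_left hmul (by positivity)
    have hinv_le_one : (k : ℝ)⁻¹ ≤ 1 := inv_le_one_of_one_le₀ hk1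
    have hky : (k : ℝ)⁻¹ * y t ≤ y t := by
      nlinarith
    have hup : (k : ℝ)⁻¹ * x t - (n : ℝ) * y t < ε := by
      rw [e2] at m2; linarith
    rw [abs_of_nonneg hlow]
    exact hup
  -- Step 2: rational multiples of nonnegative elements
  have hrat : ∀ x ∈ H, 0 ≤ x → ∀ q : ℚ, (q : ℝ) • x ∈ closure (H : Set C(X, ℝ)) := by
    intro x hxH hx q
    have hden : ((q.den : ℝ)⁻¹) • x ∈ closure (H : Set C(X, ℝ)) := key x hxH hx q.den q.pos
    have hz : q.num • (((q.den : ℝ)⁻¹) • x) ∈ H.topologicalClosure :=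
      AddSubgroup.zsmul_mem H.topologicalClosure hden q.num
    have heq : (q : ℝ) • x = q.num • (((q.den : ℝ)⁻¹) • x) := by
      rw [← Int.cast_smul_eq_zsmul ℝ, smul_smul]
      congr 1
      rw [Rat.cast_def]
      ring
    rw [heq]
    exact hz
  -- Step 3: real multiples of elements of H
  have hreal : ∀ x ∈ H, ∀ c : ℝ, c • x ∈ closure (H : Set C(X, ℝ)) := by
    have hrealpos : ∀ x ∈ H, 0 ≤ x → ∀ c : ℝ, c • x ∈ closure (H : Set C(X, ℝ)) := by
      intro x hxH hx c
      have hcont : Continuous (fun c : ℝ => c • x) := continuous_id.smul continuous_const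
      have hclosed : IsClosed ((fun c : ℝ => c • x) ⁻¹' closure (H : Set C(X, ℝ))) :=
        isClosed_closure.preimage hcont
      have hsub : Set.range ((↑) : ℚ → ℝ) ⊆
          (fun c : ℝ => c • x) ⁻¹' closure (H : Set C(X, ℝ)) := by
        rintro _ ⟨q, rfl⟩
        exact hrat x hxH hx q
      have hdense : Dense (Set.range ((↑) : ℚ → ℝ)) := Rat.denseRange_cast
      have huniv : (Set.univ : Set ℝ) ⊆
          (fun c : ℝ => c • x) ⁻¹' closure (H : Set C(X, ℝ)) := by
        rw [← hdense.closure_eq]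
        exact hclosed.closure_subset_iff.mpr hsub
      exact huniv (Set.mem_univ c)
    intro x hxH c
    obtain ⟨a, haH, b, hbH, ha0, hb0, hab⟩ := hdiff x hxH
    have hcx : c • x = c • a - c • b := by rw [hab, smul_sub]
    rw [hcx]
    exact AddSubgroup.sub_mem H.topologicalClosure (hrealpos a haH ha0 c) (hrealpos b hbH hb0 c)
  -- Step 4: closure is closed under real scalar multiplication
  have hsmul_closure : ∀ (c : ℝ), ∀ z ∈ closure (H : Set C(X, ℝ)),
      c • z ∈ closure (H : Set C(X, ℝ)) := by
    intro c z hz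
    have hcont : Continuous (fun w : C(X, ℝ) => c • w) := continuous_const_smul c
    have h1 : (fun w : C(X, ℝ) => c • w) '' closure (H : Set C(X, ℝ)) ⊆
        closure ((fun w : C(X, ℝ) => c • w) '' (H : Set C(X, ℝ))) :=
      image_closure_subset_closure_image hcont
    have h2 : (fun w : C(X, ℝ) => c • w) '' (H : Set C(X, ℝ)) ⊆ closure (H : Set C(X, ℝ)) := by
      rintro _ ⟨w, hw, rfl⟩
      exact hreal w hw c
    exact closure_minimal h2 isClosed_closure (h1 ⟨z, hz, rfl⟩)
  refine ⟨⟨{ carrier := closure (H : Set C(X, ℝ)),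
             add_mem' := fun ha hb => AddSubgroup.add_mem H.topologicalClosure ha hb,
             zero_mem' := subset_closure H.zero_mem,
             smul_mem' := fun c z hz => hsmul_closure c z hz }, rfl⟩, ?_⟩
  intro x hxH c
  exact hreal x hxH c
end

section
/- Let G be an additive subgroup of ℝ × ℝ containing the element (1,1). Suppose that for every natural number n ≥ 1 there exist elements g = (g₁, g₂) and h = (h₁, h₂) of G with g₁, g₂, h₁, h₂ ≥ 0, with (1,1) = n·g + (n+1)·h, and with g₁ ≠ g₂. Then for every nonzero ℝ-linear functional f : ℝ × ℝ → ℝ, the image f(G) is a dense subgroup of ℝ. -/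
theorem dense_image_of_weakly_divisible_subgroup_of_R2
    (G : AddSubgroup (ℝ × ℝ)) (hone : ((1, 1) : ℝ × ℝ) ∈ G)
    (hdiv : ∀ n : ℕ, 1 ≤ n → ∃ g ∈ G, ∃ h ∈ G,
      0 ≤ g.1 ∧ 0 ≤ g.2 ∧ 0 ≤ h.1 ∧ 0 ≤ h.2 ∧
      ((1, 1) : ℝ × ℝ) = (n : ℝ) • g + ((n : ℝ) + 1) • h ∧ g.1 ≠ g.2) :
    ∀ f : (ℝ × ℝ) →ₗ[ℝ] ℝ, f ≠ 0 → Dense (f '' (G : Set (ℝ × ℝ))) := by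
  intro f hf
  obtain ⟨α₁, α₂, hfval⟩ : ∃ a b : ℝ, ∀ p : ℝ × ℝ, f p = a * p.1 + b * p.2 := by
    refine ⟨f (1, 0), f (0, 1), fun p => ?_⟩
    have hp : p = p.1 • ((1, 0) : ℝ × ℝ) + p.2 • ((0, 1) : ℝ × ℝ) := by
      simp [Prod.ext_iff]
    conv_lhs => rw [hp]
    simp only [map_add, map_smul, smul_eq_mul]
    ring
  set S : AddSubgroup ℝ := G.map f.toAddMonoidHom with hS
  have hcoe : (S : Set ℝ) = f '' (G : Set (ℝ × ℝ)) := by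
    simp [hS, AddSubgroup.coe_map]
  rw [← hcoe]
  obtain ⟨C, hC, hCpos⟩ : ∃ C : ℝ, C = |α₁| + |α₂| + 1 ∧ 0 < C :=
    ⟨_, rfl, by positivity⟩
  refine S.dense_of_not_isolated_zero fun ε hε => ?_
  obtain ⟨n, hn⟩ := exists_nat_gt (C / ε)
  have hn1 : 1 ≤ n := by
    by_contra hcon
    interval_cases n
    · simp at hn
      nlinarith [div_pos hCpos hε]
  have hnpos : (0:ℝ) < n := by exact_mod_cast hn1
  have hCn : C / n < ε := by
    rw [div_lt_iff₀ hnpos]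
    calc C = (C / ε) * ε := by field_simp
    _ < n * ε := by nlinarith
    _ = ε * n := by ring
  obtain ⟨g, hgG, h, hhG, hg1, hg2, hh1, hh2, heq, hne⟩ := hdiv n hn1
  have he1 : (1:ℝ) = n * g.1 + (n + 1) * h.1 := congrArg Prod.fst heq
  have he2 : (1:ℝ) = n * g.2 + (n + 1) * h.2 := congrArg Prod.snd heq
  have hg1b : g.1 ≤ 1 / n := by rw [le_div_iff₀ hnpos]; nlinarith
  have hg2b : g.2 ≤ 1 / n := by rw [le_div_iff₀ hnpos]; nlinarith
  have hh1b : h.1 ≤ 1 / n := by rw [le_div_iff₀ hnpos]; nlinarith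
  have hh2b : h.2 ≤ 1 / n := by rw [le_div_iff₀ hnpos]; nlinarith
  -- f g ≠ 0 or f h ≠ 0
  have hkey : f g ≠ 0 ∨ f h ≠ 0 := by
    by_contra hcon
    push_neg at hcon
    obtain ⟨hfg, hfh⟩ := hcon
    have hsum : α₁ + α₂ = 0 := by
      have : f (1, 1) = (n : ℝ) * f g + ((n:ℝ) + 1) * f h := by
        rw [heq]; simp [mul_comm]
      rw [hfg, hfh] at this
      have h11 : f (1, 1) = α₁ * 1 + α₂ * 1 := hfval (1, 1)
      nlinarith [this, h11]
    have hα1 : α₁ = 0 := by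
      have := hfval g
      rw [hfg] at this
      have hα2 : α₂ = -α₁ := by linarith
      rw [hα2] at this
      have : α₁ * (g.1 - g.2) = 0 := by linarith
      rcases mul_eq_zero.mp this with h | h
      · exact h
      · exact absurd (sub_eq_zero.mp h) hne
    have hα2 : α₂ = 0 := by
      rw [hα1, zero_add] at hsum
      exact hsum
    apply hf
    apply LinearMap.ext
    intro p
    rw [hfval p, hα1, hα2]
    simp only [zero_mul, add_zero, LinearMap.zero_apply]
  have bound : ∀ p : ℝ × ℝ, 0 ≤ p.1 → 0 ≤ p.2 → p.1 ≤ 1/n → p.2 ≤ 1/n →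
      |f p| < ε := by
    intro p hp1 hp2 hb1 hb2
    rw [hfval p]
    calc |α₁ * p.1 + α₂ * p.2| ≤ |α₁| * p.1 + |α₂| * p.2 := by
          refine (abs_add_le _ _).trans ?_
          rw [abs_mul, abs_mul, abs_of_nonneg hp1, abs_of_nonneg hp2]
      _ ≤ |α₁| * (1/n) + |α₂| * (1/n) := by
          gcongr <;> positivity
      _ < C / n := by
          have hrw : C / n = |α₁| * (1/n) + |α₂| * (1/n) + 1 * (1/n) := by
            rw [hC]; ring
          have : 0 < (1:ℝ)/n := by positivity
          linarith
      _ < ε := hCn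
  have : ∃ x ∈ S, x ≠ 0 ∧ |x| < ε := by
    rcases hkey with hk | hk
    · exact ⟨f g, ⟨g, hgG, rfl⟩, hk, bound g hg1 hg2 hg1b hg2b⟩
    · exact ⟨f h, ⟨h, hhG, rfl⟩, hk, bound h hh1 hh2 hh1b hh2b⟩
  obtain ⟨x, hxS, hx0, hxε⟩ := this
  refine ⟨|x|, ?_, ?_, ?_⟩
  · rcases abs_choice x with h | h
    · rwa [h]
    · rw [h]; exact S.neg_mem hxS
  · exact abs_pos.mpr hx0
  · exact hxε
end
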